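/- arXiv:1701.05791 — 3 statements merged into one kernel-verified Lean document; each statement's English description precedes it below -/
import Mathlib

section
/- Suppose κ is an infinite regular cardinal, P is a linear order of cardinality κ, and T is a κ-saturated linear order. Then for every n < ω, T → (P, n)². -/
open Cardinal

universe u

/-- A linear order `T` is `κ`-saturated if it is nonempty and for all subsets `A, B ⊆ T`
with `|A| < κ`, `|B| < κ`, and every element of `A` below every element of `B`,
there is `c ∈ T` with `A < c < B`. -/
def KSaturated (κ : Cardinal.{u}) (T : Type u) [LinearOrder T] : Prop :=
  Nonempty T ∧ ∀ A B : Set T, #A < κ → #B < κ → (∀ a ∈ A, ∀ b ∈ B, a < b) →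
    ∃ c : T, (∀ a ∈ A, a < c) ∧ (∀ b ∈ B, c < b)

/-- `T → (P, n)²`: for every 2-coloring `f` of the pairs of `T`, either there is a
suborder of `T` order-isomorphic to `P` all of whose pairs receive color 0, or there
is an `n`-element subset of `T` all of whose pairs receive color 1. -/
def PartPair (T : Type u) [LinearOrder T] (P : Type u) [LinearOrder P] (n : ℕ) : Prop :=
  ∀ f : T → T → Fin 2,
    (∃ S : Set T, Nonempty (P ≃o S) ∧ ∀ a ∈ S, ∀ b ∈ S, a < b → f a b = 0) ∨
    (∃ S : Finset T, S.card = n ∧ ∀ a ∈ S, ∀ b ∈ S, a < b → f a b = 1)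

section Aux

variable {T : Type u} [LinearOrder T]

/-- The pair `{w, c}` receives color 1. -/
def Pair1 (f : T → T → Fin 2) (w c : T) : Prop :=
  (w < c ∧ f w c = 1) ∨ (c < w ∧ f c w = 1)

/-- A `κ`-pre-cut. -/
def Precut (κ : Cardinal.{u}) (A B : Set T) : Prop :=
  #A < κ ∧ #B < κ ∧ ∀ a ∈ A, ∀ b ∈ B, a < b

/-- `c` lies strictly between `A` and `B`. -/
def Between (A B : Set T) (c : T) : Prop :=
  (∀ a ∈ A, a < c) ∧ (∀ b ∈ B, c < b)

lemma fin2_eq_zero {x : Fin 2} (h : x ≠ 1) : x = 0 := by omega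

lemma precut_union {κ : Cardinal.{u}} (hκ : κ.IsRegular) {A B : Set T} (hAB : Precut κ A B)
    {ι : Type u} (hι : #ι < κ) (G : ι → Set T × Set T)
    (h1 : ∀ i, A ⊆ (G i).1 ∧ B ⊆ (G i).2 ∧ Precut κ (G i).1 (G i).2)
    (h2 : ∀ i j, ((G i).1 ⊆ (G j).1 ∧ (G i).2 ⊆ (G j).2) ∨
      ((G j).1 ⊆ (G i).1 ∧ (G j).2 ⊆ (G i).2)) :
    Precut κ (A ∪ ⋃ i, (G i).1) (B ∪ ⋃ i, (G i).2) := by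
  have hUA : #(⋃ i, (G i).1) < κ :=
    (card_iUnion_lt_iff_forall_of_isRegular hκ hι).2 fun i => (h1 i).2.2.1
  have hUB : #(⋃ i, (G i).2) < κ :=
    (card_iUnion_lt_iff_forall_of_isRegular hκ hι).2 fun i => (h1 i).2.2.2.1
  refine ⟨lt_of_le_of_lt (mk_union_le _ _) (add_lt_of_lt hκ.aleph0_le hAB.1 hUA),
    lt_of_le_of_lt (mk_union_le _ _) (add_lt_of_lt hκ.aleph0_le hAB.2.1 hUB), ?_⟩
  rintro a (ha | ha) b (hb | hb)
  · exact hAB.2.2 a ha b hb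
  · obtain ⟨_, ⟨j, rfl⟩, hb⟩ := hb
    exact (h1 j).2.2.2.2 a ((h1 j).1 ha) b hb
  · obtain ⟨_, ⟨i, rfl⟩, ha⟩ := ha
    exact (h1 i).2.2.2.2 a ha b ((h1 i).2.1 hb)
  · obtain ⟨_, ⟨i, rfl⟩, ha⟩ := ha
    obtain ⟨_, ⟨j, rfl⟩, hb⟩ := hb
    rcases h2 i j with ⟨hs, _⟩ | ⟨hs, hs'⟩
    · exact (h1 j).2.2.2.2 a (hs ha) b hb
    · exact (h1 i).2.2.2.2 a ha b (hs' hb)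

lemma exists_step {κ : Cardinal.{u}} (hκ : κ.IsRegular) (f : T → T → Fin 2)
    (HB : ∀ w : T, ∀ A B : Set T, Precut κ A B →
      ∃ A' B', A ⊆ A' ∧ B ⊆ B' ∧ Precut κ A' B' ∧ ∀ c, Between A' B' c → ¬ Pair1 f w c)
    (x : T) (A₁ B₁ : Set T) (h : Precut κ A₁ B₁) :
    ∃ p : Set T × Set T, A₁ ⊆ p.1 ∧ B₁ ⊆ p.2 ∧ Precut κ p.1 p.2 ∧
      ∀ c, Between p.1 p.2 c → ¬ Pair1 f x c ∧ c ≠ x := by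
  obtain ⟨A', B', hA', hB', hpre, havoid⟩ := HB x A₁ B₁ h
  by_cases hx : Between A' B' x
  · refine ⟨(insert x A', B'), hA'.trans (Set.subset_insert _ _), hB', ⟨?_, hpre.2.1, ?_⟩, ?_⟩
    · exact lt_of_le_of_lt mk_insert_le
        (add_lt_of_lt hκ.aleph0_le hpre.1 (lt_of_lt_of_le one_lt_aleph0 hκ.aleph0_le))
    · rintro a (rfl | ha) b hb
      · exact hx.2 b hb
      · exact hpre.2.2 a ha b hb
    · intro c hc
      have hc' : Between A' B' c :=
        ⟨fun a ha => hc.1 a (Set.mem_insert_of_mem _ ha), hc.2⟩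
      exact ⟨havoid c hc', (hc.1 x (Set.mem_insert _ _)).ne'⟩
  · refine ⟨(A', B'), hA', hB', hpre, fun c hc => ⟨havoid c hc, ?_⟩⟩
    rintro rfl
    exact hx hc

lemma exists_avoid {κ : Cardinal.{u}} (hκ : κ.IsRegular) (f : T → T → Fin 2)
    (hT : KSaturated κ T)
    (HB : ∀ w : T, ∀ A B : Set T, Precut κ A B →
      ∃ A' B', A ⊆ A' ∧ B ⊆ B' ∧ Precut κ A' B' ∧ ∀ c, Between A' B' c → ¬ Pair1 f w c)
    (A B W : Set T) (hAB : Precut κ A B) (hW : #W < κ) :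
    ∃ c, Between A B c ∧ c ∉ W ∧ ∀ w ∈ W, ¬ Pair1 f w c := by
  classical
  let r : ↥W → ↥W → Prop := WellOrderingRel
  have wf : WellFounded r := IsWellFounded.wf
  let Q : (w : ↥W) → ((w' : ↥W) → r w' w → Set T × Set T) → (Set T × Set T) → Prop :=
    fun w g p =>
      (A ∪ ⋃ i : {w' : ↥W // r w' w}, (g i.1 i.2).1) ⊆ p.1 ∧
      (B ∪ ⋃ i : {w' : ↥W // r w' w}, (g i.1 i.2).2) ⊆ p.2 ∧
      Precut κ p.1 p.2 ∧ ∀ c, Between p.1 p.2 c → ¬ Pair1 f w.1 c ∧ c ≠ w.1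
  let Func : (w : ↥W) → ((w' : ↥W) → r w' w → Set T × Set T) → Set T × Set T :=
    fun w g => if h : ∃ p, Q w g p then h.choose else (∅, ∅)
  let F : ↥W → Set T × Set T := wf.fix Func
  have hFeq : ∀ w, F w = Func w (fun w' _ => F w') := fun w => wf.fix_eq Func w
  have key : ∀ w : ↥W, A ⊆ (F w).1 ∧ B ⊆ (F w).2 ∧ Precut κ (F w).1 (F w).2 ∧
      (∀ c, Between (F w).1 (F w).2 c → ¬ Pair1 f w.1 c ∧ c ≠ w.1) ∧
      ∀ w', r w' w → (F w').1 ⊆ (F w).1 ∧ (F w').2 ⊆ (F w).2 := by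
    have main : ∀ w : ↥W, (∀ w', r w' w →
        (A ⊆ (F w').1 ∧ B ⊆ (F w').2 ∧ Precut κ (F w').1 (F w').2 ∧
        (∀ c, Between (F w').1 (F w').2 c → ¬ Pair1 f w'.1 c ∧ c ≠ w'.1) ∧
        ∀ w'', r w'' w' → (F w'').1 ⊆ (F w').1 ∧ (F w'').2 ⊆ (F w').2)) →
        (A ⊆ (F w).1 ∧ B ⊆ (F w).2 ∧ Precut κ (F w).1 (F w).2 ∧
        (∀ c, Between (F w).1 (F w).2 c → ¬ Pair1 f w.1 c ∧ c ≠ w.1) ∧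
        ∀ w', r w' w → (F w').1 ⊆ (F w).1 ∧ (F w').2 ⊆ (F w).2) := by
      intro w IH
      have hι : #{w' : ↥W // r w' w} < κ := lt_of_le_of_lt (mk_subtype_le _) hW
      have hpre : Precut κ (A ∪ ⋃ i : {w' : ↥W // r w' w}, (F i.1).1)
          (B ∪ ⋃ i : {w' : ↥W // r w' w}, (F i.1).2) := by
        refine precut_union hκ hAB hι (fun i => F i.1) (fun i => ⟨(IH i.1 i.2).1,
          (IH i.1 i.2).2.1, (IH i.1 i.2).2.2.1⟩) ?_
        intro i j
        rcases trichotomous_of r i.1 j.1 with h | h | h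
        · exact Or.inl ((IH j.1 j.2).2.2.2.2 i.1 h)
        · obtain ⟨i, hi⟩ := i; obtain ⟨j, hj⟩ := j
          cases h
          exact Or.inl ⟨subset_rfl, subset_rfl⟩
        · exact Or.inr ((IH i.1 i.2).2.2.2.2 j.1 h)
      have hex : ∃ p, Q w (fun w' _ => F w') p := by
        obtain ⟨p, h1, h2, h3, h4⟩ := exists_step hκ f HB w.1 _ _ hpre
        exact ⟨p, h1, h2, h3, h4⟩
      have hFw : F w = hex.choose := by rw [hFeq w]; exact dif_pos hex
      have hQ : Q w (fun w' _ => F w') (F w) := by rw [hFw]; exact hex.choose_spec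
      obtain ⟨q1, q2, q3, q4⟩ := hQ
      refine ⟨(Set.subset_union_left).trans q1, (Set.subset_union_left).trans q2, q3, q4, ?_⟩
      intro w' hw'
      constructor
      · exact ((Set.subset_iUnion (fun i : {w'' : ↥W // r w'' w} => (F i.1).1) ⟨w', hw'⟩).trans
          Set.subset_union_right).trans q1
      · exact ((Set.subset_iUnion (fun i : {w'' : ↥W // r w'' w} => (F i.1).2) ⟨w', hw'⟩).trans
          Set.subset_union_right).trans q2
    exact fun w => wf.induction w main
  have hpre : Precut κ (A ∪ ⋃ w : ↥W, (F w).1) (B ∪ ⋃ w : ↥W, (F w).2) := by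
    refine precut_union hκ hAB hW F (fun i => ⟨(key i).1, (key i).2.1, (key i).2.2.1⟩) ?_
    intro i j
    rcases trichotomous_of r i j with h | h | h
    · exact Or.inl ((key j).2.2.2.2 i h)
    · exact Or.inl (by rw [h]; exact ⟨subset_rfl, subset_rfl⟩)
    · exact Or.inr ((key i).2.2.2.2 j h)
  obtain ⟨c, hc1, hc2⟩ := hT.2 _ _ hpre.1 hpre.2.1 hpre.2.2
  have hbet : ∀ w : ↥W, Between (F w).1 (F w).2 c := by
    intro w
    constructor
    · intro a ha
      exact hc1 a (Or.inr (Set.mem_iUnion.2 ⟨w, ha⟩))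
    · intro b hb
      exact hc2 b (Or.inr (Set.mem_iUnion.2 ⟨w, hb⟩))
  refine ⟨c, ⟨fun a ha => hc1 a (Or.inl ha), fun b hb => hc2 b (Or.inl hb)⟩, ?_, ?_⟩
  · intro hcW
    exact ((key ⟨c, hcW⟩).2.2.2.1 c (hbet ⟨c, hcW⟩)).2 rfl
  · intro w hw
    exact ((key ⟨w, hw⟩).2.2.2.1 c (hbet ⟨w, hw⟩)).1

lemma embed_P {κ : Cardinal.{u}} (hκ : κ.IsRegular) (P : Type u) [LinearOrder P]
    (hP : #P = κ) (f : T → T → Fin 2)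
    (ext : ∀ A B W : Set T, Precut κ A B → #W < κ →
      ∃ c, Between A B c ∧ c ∉ W ∧ ∀ w ∈ W, ¬ Pair1 f w c) :
    ∃ S : Set T, Nonempty (P ≃o S) ∧ ∀ a ∈ S, ∀ b ∈ S, a < b → f a b = 0 := by
  classical
  -- enumerate P along κ.ord
  have hPT : #P = #(κ.ord.ToType) := by rw [Cardinal.mk_toType, Cardinal.card_ord, hP]
  obtain ⟨e⟩ : Nonempty (P ≃ κ.ord.ToType) := Cardinal.eq.mp hPT
  -- Zorn on partial embeddings
  let Good : Set (P × T) → Prop := fun G =>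
    (∀ q ∈ G, ∀ q' ∈ G, (q.1 < q'.1 → q.2 < q'.2) ∧ (q.1 = q'.1 → q.2 = q'.2)) ∧
    (∀ q ∈ G, ∀ p : P, e p < e q.1 → ∃ t, (p, t) ∈ G) ∧
    (∀ q ∈ G, ∀ q' ∈ G, q.2 < q'.2 → f q.2 q'.2 = 0)
  obtain ⟨M, hM⟩ : ∃ M, Maximal (· ∈ {G | Good G}) M := by
    apply zorn_subset
    intro c hc hchain
    rcases Set.eq_empty_or_nonempty c with rfl | hcne
    · exact ⟨∅, ⟨by simp, by simp, by simp⟩, by simp⟩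
    refine ⟨⋃₀ c, ⟨?_, ?_, ?_⟩, fun s hs => Set.subset_sUnion_of_mem hs⟩
    · rintro q ⟨G, hG, hq⟩ q' ⟨G', hG', hq'⟩
      rcases hchain.total hG hG' with h | h
      · exact (hc hG').1 q (h hq) q' hq'
      · exact (hc hG).1 q hq q' (h hq')
    · rintro q ⟨G, hG, hq⟩ p hp
      obtain ⟨t, ht⟩ := (hc hG).2.1 q hq p hp
      exact ⟨t, G, hG, ht⟩
    · rintro q ⟨G, hG, hq⟩ q' ⟨G', hG', hq'⟩ hlt
      rcases hchain.total hG hG' with h | h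
      · exact (hc hG').2.2 q (h hq) q' hq' hlt
      · exact (hc hG).2.2 q hq q' (h hq') hlt
  have hGoodM : Good M := hM.1
  set dom : Set P := {p | ∃ t, (p, t) ∈ M} with hdom
  -- the domain of the maximal embedding is everything
  have hdomall : ∀ p : P, p ∈ dom := by
    by_contra hne
    push_neg at hne
    obtain ⟨p₁, hp₁⟩ := hne
    -- least element of the complement
    have hEne : (e '' domᶜ).Nonempty := ⟨e p₁, p₁, hp₁, rfl⟩
    have wf : WellFounded ((· < ·) : κ.ord.ToType → κ.ord.ToType → Prop) := IsWellFounded.wf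
    set x₀ := wf.min _ hEne with hx₀
    obtain ⟨p₀, hp₀c, hp₀e⟩ := wf.min_mem _ hEne
    have hmin : ∀ q : P, e q < x₀ → q ∈ dom := by
      intro q hq
      by_contra hqc
      exact wf.not_lt_min (e '' domᶜ) (x := e q) ⟨q, hqc, rfl⟩ hq
    -- dom is contained in a small set
    have hdsub : dom ⊆ {q | e q < x₀} := by
      intro q hq
      rcases lt_trichotomy (e q) x₀ with h | h | h
      · exact h
      · have hqp : q = p₀ := e.injective (by rw [h, hp₀e])
        exact absurd (hqp ▸ hq) hp₀c
      · obtain ⟨t, ht⟩ := hq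
        obtain ⟨u, hu⟩ := hGoodM.2.1 (q, t) ht p₀ (by rw [hp₀e]; exact h)
        exact absurd ⟨u, hu⟩ hp₀c
    have hdomlt : #dom < κ := by
      refine lt_of_le_of_lt (mk_le_mk_of_subset hdsub) (lt_of_le_of_lt ?_
        (Cardinal.mk_Iio_ord_toType x₀))
      exact mk_le_of_injective (f := fun q : {q : P | e q < x₀} =>
        (⟨e q.1, q.2⟩ : Set.Iio x₀)) (fun a b hab => Subtype.ext (e.injective
          (congrArg Subtype.val hab)))
    -- the range so far
    set Wr : Set T := {t | ∃ p, (p, t) ∈ M} with hWr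
    have hWlt : #Wr < κ := by
      refine lt_of_le_of_lt (mk_le_of_surjective (f := fun q : dom =>
        (⟨q.2.choose, q.1, q.2.choose_spec⟩ : Wr)) ?_) hdomlt
      rintro ⟨t, p, hpt⟩
      have hpd : p ∈ dom := ⟨t, hpt⟩
      refine ⟨⟨p, hpd⟩, Subtype.ext ?_⟩
      exact (hGoodM.1 (p, hpd.choose) hpd.choose_spec (p, t) hpt).2 rfl
    set Ar : Set T := {t | ∃ p, (p, t) ∈ M ∧ p < p₀} with hAr
    set Br : Set T := {t | ∃ p, (p, t) ∈ M ∧ p₀ < p} with hBr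
    have hArW : Ar ⊆ Wr := fun t ⟨p, h1, _⟩ => ⟨p, h1⟩
    have hBrW : Br ⊆ Wr := fun t ⟨p, h1, _⟩ => ⟨p, h1⟩
    have hpre : Precut κ Ar Br := by
      refine ⟨lt_of_le_of_lt (mk_le_mk_of_subset hArW) hWlt,
        lt_of_le_of_lt (mk_le_mk_of_subset hBrW) hWlt, ?_⟩
      rintro a ⟨p, hp, hplt⟩ b ⟨p', hp', hplt'⟩
      exact (hGoodM.1 (p, a) hp (p', b) hp').1 (hplt.trans hplt')
    obtain ⟨cnew, hcbet, hcW, hcpair⟩ := ext Ar Br Wr hpre hWlt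
    -- extend M
    have hGoodM' : Good (insert (p₀, cnew) M) := by
      refine ⟨?_, ?_, ?_⟩
      · rintro q (rfl | hq) q' (rfl | hq')
        · exact ⟨fun h => absurd h (lt_irrefl _), fun _ => rfl⟩
        · constructor
          · intro h
            exact hcbet.2 q'.2 ⟨q'.1, hq', h⟩
          · intro h
            exact absurd (show p₀ ∈ dom by rw [show p₀ = q'.1 from h]; exact ⟨q'.2, by simpa using hq'⟩) hp₀c
        · constructor
          · intro h
            exact hcbet.1 q.2 ⟨q.1, hq, h⟩
          · intro h
            exact absurd (show p₀ ∈ dom by rw [← show q.1 = p₀ from h]; exact ⟨q.2, by simpa using hq⟩) hp₀c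
        · exact hGoodM.1 q hq q' hq'
      · rintro q (rfl | hq) p hp
        · obtain ⟨t, ht⟩ := hmin p (by rwa [hp₀e] at hp)
          exact ⟨t, Or.inr ht⟩
        · obtain ⟨t, ht⟩ := hGoodM.2.1 q hq p hp
          exact ⟨t, Or.inr ht⟩
      · rintro q (rfl | hq) q' (rfl | hq') hlt
        · exact absurd hlt (lt_irrefl _)
        · have := hcpair q'.2 ⟨q'.1, hq'⟩
          have h1 : ¬ (cnew < q'.2 ∧ f cnew q'.2 = 1) := fun h => this (Or.inr ⟨h.1, h.2⟩)
          exact fin2_eq_zero (fun h => h1 ⟨hlt, h⟩)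
        · have := hcpair q.2 ⟨q.1, hq⟩
          have h1 : ¬ (q.2 < cnew ∧ f q.2 cnew = 1) := fun h => this (Or.inl ⟨h.1, h.2⟩)
          exact fin2_eq_zero (fun h => h1 ⟨hlt, h⟩)
        · exact hGoodM.2.2 q hq q' hq' hlt
    have hsub : M ⊆ insert (p₀, cnew) M := Set.subset_insert _ _
    have : insert (p₀, cnew) M ⊆ M := hM.2 hGoodM' hsub
    exact hp₀c ⟨cnew, this (Set.mem_insert _ _)⟩
  -- build the order isomorphism
  set Wr : Set T := {t | ∃ p, (p, t) ∈ M} with hWr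
  let g : P → Wr := fun p => ⟨(hdomall p).choose, p, (hdomall p).choose_spec⟩
  have hg : ∀ p, (p, (g p).1) ∈ M := fun p => (hdomall p).choose_spec
  have hmono : StrictMono g := by
    intro p p' hpp
    exact (hGoodM.1 (p, (g p).1) (hg p) (p', (g p').1) (hg p')).1 hpp
  have hsurj : Function.Surjective g := by
    rintro ⟨t, p, hpt⟩
    refine ⟨p, Subtype.ext ?_⟩
    exact (hGoodM.1 (p, (g p).1) (hg p) (p, t) hpt).2 rfl
  refine ⟨Wr, ⟨StrictMono.orderIsoOfSurjective g hmono hsurj⟩, ?_⟩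
  rintro a ⟨p, hp⟩ b ⟨p', hp'⟩ hab
  exact hGoodM.2.2 (p, a) hp (p', b) hp' hab

-- lift an order-embedded copy from a subtype
lemma lift_copy (P : Type u) [LinearOrder P] {Y : Set T} (S' : Set Y)
    (iso : P ≃o S') : ∃ S : Set T, Nonempty (P ≃o S) ∧ S = Subtype.val '' S' := by
  refine ⟨Subtype.val '' S', ⟨?_⟩, rfl⟩
  · have hmono : StrictMono (fun p : P => (⟨((iso p : S') : Y).1,
        ⟨(iso p : S'), (iso p).2, rfl⟩⟩ : Subtype.val '' S')) := by
      intro p p' hpp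
      have := iso.strictMono hpp
      exact this
    refine StrictMono.orderIsoOfSurjective _ hmono ?_
    rintro ⟨t, y, hy, rfl⟩
    obtain ⟨p, hp⟩ := iso.surjective ⟨y, hy⟩
    exact ⟨p, Subtype.ext (congrArg (fun s : S' => (s.1.1 : T)) hp)⟩

lemma aux_main (κ : Cardinal.{u}) (hκ : κ.IsRegular) (P : Type u) [LinearOrder P]
    (hP : #P = κ) : ∀ (n : ℕ) (T : Type u) (_ : LinearOrder T),
    KSaturated κ T → PartPair T P n := by
  intro n
  induction n with
  | zero =>
    intro T _ hT f
    right
    exact ⟨∅, rfl, by simp⟩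
  | succ n IH =>
    intro T instT hT f
    classical
    by_cases h1 : ∃ S : Finset T, S.card = n + 1 ∧ ∀ a ∈ S, ∀ b ∈ S, a < b → f a b = 1
    · right; exact h1
    by_cases HA : ∃ (w : T) (A B : Set T), Precut κ A B ∧
        ∀ A' B', A ⊆ A' → B ⊆ B' → Precut κ A' B' →
          ∃ c, Pair1 f w c ∧ Between A' B' c
    · -- dense case
      obtain ⟨w, A, B, hAB, hdense⟩ := HA
      set Y : Set T := {c | Pair1 f w c ∧ Between A B c} with hY
      have hYsat : KSaturated κ ↥Y := by
        constructor
        · obtain ⟨c, hc1, hc2⟩ := hdense A B subset_rfl subset_rfl hAB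
          exact ⟨⟨c, hc1, hc2⟩⟩
        · intro A₀ B₀ hA₀ hB₀ hord
          set A' : Set T := A ∪ (Subtype.val '' A₀) with hA'
          set B' : Set T := B ∪ (Subtype.val '' B₀) with hB'
          have hpre : Precut κ A' B' := by
            refine ⟨lt_of_le_of_lt (mk_union_le _ _)
                (add_lt_of_lt hκ.aleph0_le hAB.1 (lt_of_le_of_lt mk_image_le hA₀)),
              lt_of_le_of_lt (mk_union_le _ _)
                (add_lt_of_lt hκ.aleph0_le hAB.2.1 (lt_of_le_of_lt mk_image_le hB₀)), ?_⟩
            rintro a (ha | ⟨x, hx, rfl⟩) b (hb | ⟨y, hy, rfl⟩)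
            · exact hAB.2.2 a ha b hb
            · exact y.2.2.1 a ha
            · exact x.2.2.2 b hb
            · exact hord x hx y hy
          obtain ⟨c, hcp, hcb⟩ := hdense A' B' Set.subset_union_left Set.subset_union_left hpre
          have hcY : c ∈ Y := ⟨hcp, ⟨fun a ha => hcb.1 a (Or.inl ha), fun b hb => hcb.2 b (Or.inl hb)⟩⟩
          refine ⟨⟨c, hcY⟩, ?_, ?_⟩
          · intro x hx
            exact Subtype.mk_lt_mk.2 (hcb.1 x.1 (Or.inr ⟨x, hx, rfl⟩))
          · intro y hy
            exact Subtype.mk_lt_mk.2 (hcb.2 y.1 (Or.inr ⟨y, hy, rfl⟩))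
      rcases IH ↥Y inferInstance hYsat (fun x y => f x.1 y.1) with ⟨S', ⟨iso⟩, h0⟩ | ⟨s, hcard, hs1⟩
      · obtain ⟨S, hiso, hSeq⟩ := lift_copy P S' iso
        left
        refine ⟨S, hiso, ?_⟩
        rw [hSeq]
        rintro a ⟨x, hx, rfl⟩ b ⟨y, hy, rfl⟩ hab
        exact h0 x hx y hy (Subtype.mk_lt_mk.2 hab)
      · exfalso
        apply h1
        have hwni : w ∉ s.image Subtype.val := by
          intro hw
          obtain ⟨x, _, hx⟩ := Finset.mem_image.1 hw
          have := x.2.1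
          rw [hx] at this
          rcases this with ⟨h, _⟩ | ⟨h, _⟩ <;> exact absurd h (lt_irrefl w)
        refine ⟨insert w (s.image Subtype.val), ?_, ?_⟩
        · rw [Finset.card_insert_of_notMem hwni,
            Finset.card_image_of_injective s Subtype.val_injective, hcard]
        · intro a ha b hb hab
          rcases Finset.mem_insert.1 ha with rfl | ha' <;>
            rcases Finset.mem_insert.1 hb with rfl | hb'
          · exact absurd hab (lt_irrefl _)
          · obtain ⟨y, hy, rfl⟩ := Finset.mem_image.1 hb'
            rcases y.2.1 with ⟨_, hfy⟩ | ⟨hlt, _⟩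
            · exact hfy
            · exact absurd (hab.trans hlt) (lt_irrefl _)
          · obtain ⟨x, hx, rfl⟩ := Finset.mem_image.1 ha'
            rcases x.2.1 with ⟨hlt, _⟩ | ⟨_, hfx⟩
            · exact absurd (hab.trans hlt) (lt_irrefl _)
            · exact hfx
          · obtain ⟨x, hx, rfl⟩ := Finset.mem_image.1 ha'
            obtain ⟨y, hy, rfl⟩ := Finset.mem_image.1 hb'
            exact hs1 x hx y hy (Subtype.mk_lt_mk.2 hab)
    · -- nowhere dense case
      left
      push_neg at HA
      have HB : ∀ w : T, ∀ A B : Set T, Precut κ A B →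
          ∃ A' B', A ⊆ A' ∧ B ⊆ B' ∧ Precut κ A' B' ∧
            ∀ c, Between A' B' c → ¬ Pair1 f w c := by
        intro w A B hAB
        obtain ⟨A', B', hA', hB', hpre, hno⟩ := HA w A B hAB
        exact ⟨A', B', hA', hB', hpre, fun c hc hp => hno c hp hc⟩
      exact embed_P hκ P hP f (exists_avoid hκ f hT HB)

end Aux

/-- Suppose `κ` is an infinite regular cardinal, `P` is a linear order of
cardinality `κ`, and `T` is a `κ`-saturated linear order.  Then for every `n < ω`,
`T → (P, n)²`. -/
theorem stmt7 (κ : Cardinal.{u}) (hκ : κ.IsRegular) (P : Type u) [LinearOrder P]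
    (hP : #P = κ) (T : Type u) [LinearOrder T] (hT : KSaturated κ T) (n : ℕ) :
    PartPair T P n :=
  aux_main κ hκ P hP n T inferInstance hT
end

section
/- Suppose κ is an infinite cardinal with κ^{<κ} = κ and P₀, P₁ are weakly κ-scattered linear orders. Then the lexicographic product P₀ ×_lex P₁ is weakly κ-scattered. -/
open Cardinal

universe u

/-- A linear order is weakly `κ`-scattered if it has no `κ`-saturated suborder. -/
def WeaklyKScattered (κ : Cardinal.{u}) (P : Type u) [LinearOrder P] : Prop :=
  ∀ S : Set P, ¬ KSaturated κ S

lemma lex_lt_iff' {α β : Type*} [LinearOrder α] [LinearOrder β] (p q : α ×ₗ β) :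
    p < q ↔ (ofLex p).1 < (ofLex q).1 ∨ ((ofLex p).1 = (ofLex q).1 ∧ (ofLex p).2 < (ofLex q).2) :=
  Prod.Lex.lt_iff

lemma isRegular_of_powerlt {κ : Cardinal.{u}} (hκ : ℵ₀ ≤ κ) (hpow : κ ^< κ = κ) :
    κ.IsRegular := by
  refine ⟨hκ, ?_⟩
  by_contra h
  push_neg at h
  have h1 : κ < κ ^ (Ordinal.cof κ.ord) := Cardinal.lt_power_cof hκ
  have h2 : κ ^ (Ordinal.cof κ.ord) ≤ κ ^< κ := Cardinal.le_powerlt κ h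
  rw [hpow] at h2
  exact absurd (h1.trans_le h2) (lt_irrefl κ)

section Aux

variable {κ : Cardinal.{u}} {P₀ P₁ : Type u} [LinearOrder P₀] [LinearOrder P₁]

lemma singleton_lt {α : Type u} (hκ : ℵ₀ ≤ κ) (y : α) : #({y} : Set α) < κ := by
  rw [Cardinal.mk_singleton]
  exact lt_of_lt_of_le Cardinal.one_lt_aleph0 hκ

/-- Every fiber of a κ-saturated suborder of the lex product has a small
"top-blocking" set: a small subset such that no element of the fiber lies strictly
above all of it. -/
lemma top_block (hκ : ℵ₀ ≤ κ) (h₁ : WeaklyKScattered κ P₁)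
    {S : Set (P₀ ×ₗ P₁)}
    (between : ∀ X Y : Set (P₀ ×ₗ P₁), X ⊆ S → Y ⊆ S → #X < κ → #Y < κ →
      (∀ x ∈ X, ∀ y ∈ Y, x < y) →
      ∃ c ∈ S, (∀ x ∈ X, x < c) ∧ (∀ y ∈ Y, c < y))
    (a : P₀) (y₀ : P₁) (hy₀ : toLex (a, y₀) ∈ S) :
    ∃ C : Set P₁, (∀ y ∈ C, toLex (a, y) ∈ S) ∧ #C < κ ∧
      ∀ z : P₁, toLex (a, z) ∈ S → ∃ y ∈ C, z ≤ y := by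
  by_contra hcon
  push_neg at hcon
  -- hcon : ∀ C, (∀ y ∈ C, toLex (a,y) ∈ S) → #C < κ → ∃ z, toLex (a,z) ∈ S ∧ ∀ y ∈ C, y < z
  set S' : Set P₁ := {y | toLex (a, y) ∈ S ∧ y₀ < y} with hS'def
  apply h₁ S'
  constructor
  · obtain ⟨z, hzS, hz⟩ := hcon {y₀} (by simpa using hy₀) (singleton_lt hκ y₀)
    exact ⟨⟨z, hzS, hz y₀ rfl⟩⟩
  · intro X Y hX hY hXY
    rcases Set.eq_empty_or_nonempty Y with hYe | ⟨y₁, hy₁⟩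
    · -- Y empty: use hcon directly on (val '' X) ∪ {y₀}
      obtain ⟨z, hzS, hz⟩ := hcon ((Subtype.val '' X) ∪ {y₀})
        (by
          rintro y (⟨x, hx, rfl⟩ | rfl)
          · exact x.2.1
          · exact hy₀)
        ((Cardinal.mk_union_le _ _).trans_lt
          (Cardinal.add_lt_of_lt hκ ((Cardinal.mk_image_le).trans_lt hX)
            (singleton_lt hκ y₀)))
      refine ⟨⟨z, hzS, hz y₀ (Or.inr rfl)⟩, fun x hx => ?_, fun y hy => ?_⟩
      · exact Subtype.coe_lt_coe.mp (hz x.val (Or.inl ⟨x, hx, rfl⟩))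
      · rw [hYe] at hy; exact absurd hy (Set.notMem_empty y)
    · -- Y nonempty
      obtain ⟨c, hcS, hc₁, hc₂⟩ := between
        ((fun y => toLex (a, y)) '' ((Subtype.val '' X) ∪ {y₀}))
        ((fun y => toLex (a, y)) '' (Subtype.val '' Y))
        (by rintro p ⟨y, (⟨x, hx, rfl⟩ | rfl), rfl⟩
            · exact x.2.1
            · exact hy₀)
        (by rintro p ⟨y, ⟨x, hx, rfl⟩, rfl⟩; exact x.2.1)
        ((Cardinal.mk_image_le).trans_lt ((Cardinal.mk_union_le _ _).trans_lt
          (Cardinal.add_lt_of_lt hκ ((Cardinal.mk_image_le).trans_lt hX)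
            (singleton_lt hκ y₀))))
        ((Cardinal.mk_image_le).trans_lt ((Cardinal.mk_image_le).trans_lt hY))
        (by
          rintro p ⟨u, hu, rfl⟩ q ⟨v, ⟨y, hy, rfl⟩, rfl⟩
          refine (lex_lt_iff' _ _).mpr (Or.inr ⟨rfl, ?_⟩)
          rcases hu with ⟨x, hx, rfl⟩ | rfl
          · exact Subtype.coe_lt_coe.mpr (hXY x hx y hy)
          · exact y.2.2)
      -- first coordinate of c is a
      have hb₁ : toLex (a, y₀) < c := hc₁ _ ⟨y₀, Or.inr rfl, rfl⟩
      have hb₂ : c < toLex (a, (y₁ : P₁)) := hc₂ _ ⟨(y₁ : P₁), ⟨y₁, hy₁, rfl⟩, rfl⟩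
      have h1 := (lex_lt_iff' _ _).mp hb₁
      have h2 := (lex_lt_iff' _ _).mp hb₂
      have ha : (ofLex c).1 = a := by
        rcases h1 with h1 | ⟨h1, _⟩
        · rcases h2 with h2 | ⟨h2, _⟩
          · exact absurd (h1.trans h2) (lt_irrefl a)
          · exact h2
        · exact h1.symm
      have hceq : toLex (a, (ofLex c).2) = c := by rw [← ha]; rfl
      have hy₀z : y₀ < (ofLex c).2 := by
        rcases h1 with h1 | ⟨_, h1⟩
        · rw [ha] at h1; exact absurd h1 (lt_irrefl a)
        · exact h1
      have hzS' : (ofLex c).2 ∈ S' := ⟨by rw [hceq]; exact hcS, hy₀z⟩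
      refine ⟨⟨(ofLex c).2, hzS'⟩, fun x hx => ?_, fun y hy => ?_⟩
      · have := hc₁ _ ⟨x.val, Or.inl ⟨x, hx, rfl⟩, rfl⟩
        rcases (lex_lt_iff' _ _).mp this with h | ⟨_, h⟩
        · rw [ha] at h; exact absurd h (lt_irrefl a)
        · exact Subtype.coe_lt_coe.mp h
      · have := hc₂ _ ⟨y.val, ⟨y, hy, rfl⟩, rfl⟩
        rcases (lex_lt_iff' _ _).mp this with h | ⟨_, h⟩
        · rw [ha] at h; exact absurd h (lt_irrefl a)
        · exact Subtype.coe_lt_coe.mp h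

/-- Dually, every fiber has a small "bottom-blocking" set. -/
lemma bot_block (hκ : ℵ₀ ≤ κ) (h₁ : WeaklyKScattered κ P₁)
    {S : Set (P₀ ×ₗ P₁)}
    (between : ∀ X Y : Set (P₀ ×ₗ P₁), X ⊆ S → Y ⊆ S → #X < κ → #Y < κ →
      (∀ x ∈ X, ∀ y ∈ Y, x < y) →
      ∃ c ∈ S, (∀ x ∈ X, x < c) ∧ (∀ y ∈ Y, c < y))
    (a : P₀) (y₀ : P₁) (hy₀ : toLex (a, y₀) ∈ S) :
    ∃ C : Set P₁, (∀ y ∈ C, toLex (a, y) ∈ S) ∧ #C < κ ∧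
      ∀ z : P₁, toLex (a, z) ∈ S → ∃ y ∈ C, y ≤ z := by
  by_contra hcon
  push_neg at hcon
  set S' : Set P₁ := {y | toLex (a, y) ∈ S ∧ y < y₀} with hS'def
  apply h₁ S'
  constructor
  · obtain ⟨z, hzS, hz⟩ := hcon {y₀} (by simpa using hy₀) (singleton_lt hκ y₀)
    exact ⟨⟨z, hzS, hz y₀ rfl⟩⟩
  · intro X Y hX hY hXY
    rcases Set.eq_empty_or_nonempty X with hXe | ⟨x₁, hx₁⟩
    · -- X empty: use hcon directly on (val '' Y) ∪ {y₀}
      obtain ⟨z, hzS, hz⟩ := hcon ((Subtype.val '' Y) ∪ {y₀})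
        (by
          rintro y (⟨x, hx, rfl⟩ | rfl)
          · exact x.2.1
          · exact hy₀)
        ((Cardinal.mk_union_le _ _).trans_lt
          (Cardinal.add_lt_of_lt hκ ((Cardinal.mk_image_le).trans_lt hY)
            (singleton_lt hκ y₀)))
      refine ⟨⟨z, hzS, hz y₀ (Or.inr rfl)⟩, fun x hx => ?_, fun y hy => ?_⟩
      · rw [hXe] at hx; exact absurd hx (Set.notMem_empty x)
      · exact Subtype.coe_lt_coe.mp (hz y.val (Or.inl ⟨y, hy, rfl⟩))
    · -- X nonempty
      obtain ⟨c, hcS, hc₁, hc₂⟩ := between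
        ((fun y => toLex (a, y)) '' (Subtype.val '' X))
        ((fun y => toLex (a, y)) '' ((Subtype.val '' Y) ∪ {y₀}))
        (by rintro p ⟨v, ⟨x, hx, rfl⟩, rfl⟩; exact x.2.1)
        (by rintro p ⟨y, (⟨x, hx, rfl⟩ | rfl), rfl⟩
            · exact x.2.1
            · exact hy₀)
        ((Cardinal.mk_image_le).trans_lt ((Cardinal.mk_image_le).trans_lt hX))
        ((Cardinal.mk_image_le).trans_lt ((Cardinal.mk_union_le _ _).trans_lt
          (Cardinal.add_lt_of_lt hκ ((Cardinal.mk_image_le).trans_lt hY)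
            (singleton_lt hκ y₀))))
        (by
          rintro p ⟨u, ⟨x, hx, rfl⟩, rfl⟩ q ⟨v, hv, rfl⟩
          refine (lex_lt_iff' _ _).mpr (Or.inr ⟨rfl, ?_⟩)
          rcases hv with ⟨y, hy, rfl⟩ | rfl
          · exact Subtype.coe_lt_coe.mpr (hXY x hx y hy)
          · exact x.2.2)
      have hb₁ : toLex (a, (x₁ : P₁)) < c := hc₁ _ ⟨(x₁ : P₁), ⟨x₁, hx₁, rfl⟩, rfl⟩
      have hb₂ : c < toLex (a, y₀) := hc₂ _ ⟨y₀, Or.inr rfl, rfl⟩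
      have h1 := (lex_lt_iff' _ _).mp hb₁
      have h2 := (lex_lt_iff' _ _).mp hb₂
      have ha : (ofLex c).1 = a := by
        rcases h2 with h2 | ⟨h2, _⟩
        · rcases h1 with h1 | ⟨h1, _⟩
          · exact absurd (h1.trans h2) (lt_irrefl a)
          · exact h1.symm
        · exact h2
      have hceq : toLex (a, (ofLex c).2) = c := by rw [← ha]; rfl
      have hy₀z : (ofLex c).2 < y₀ := by
        rcases h2 with h2 | ⟨_, h2⟩
        · rw [ha] at h2; exact absurd h2 (lt_irrefl a)
        · exact h2
      have hzS' : (ofLex c).2 ∈ S' := ⟨by rw [hceq]; exact hcS, hy₀z⟩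
      refine ⟨⟨(ofLex c).2, hzS'⟩, fun x hx => ?_, fun y hy => ?_⟩
      · have := hc₁ _ ⟨x.val, ⟨x, hx, rfl⟩, rfl⟩
        rcases (lex_lt_iff' _ _).mp this with h | ⟨_, h⟩
        · rw [ha] at h; exact absurd h (lt_irrefl a)
        · exact Subtype.coe_lt_coe.mp h
      · have := hc₂ _ ⟨y.val, Or.inl ⟨y, hy, rfl⟩, rfl⟩
        rcases (lex_lt_iff' _ _).mp this with h | ⟨_, h⟩
        · rw [ha] at h; exact absurd h (lt_irrefl a)
        · exact Subtype.coe_lt_coe.mp h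

end Aux

/-- Suppose `κ` is an infinite cardinal with `κ^{<κ} = κ` and `P₀, P₁`
are weakly `κ`-scattered linear orders.  Then the lexicographic product `P₀ ×ₗ P₁`
is weakly `κ`-scattered. -/
theorem stmt10 (κ : Cardinal.{u}) (hκ : ℵ₀ ≤ κ) (hpow : κ ^< κ = κ)
    (P₀ P₁ : Type u) [LinearOrder P₀] [LinearOrder P₁]
    (h₀ : WeaklyKScattered κ P₀) (h₁ : WeaklyKScattered κ P₁) :
    WeaklyKScattered κ (P₀ ×ₗ P₁) := by
  intro S hS
  obtain ⟨hne, hsat⟩ := hS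
  have hreg : κ.IsRegular := isRegular_of_powerlt hκ hpow
  have between : ∀ X Y : Set (P₀ ×ₗ P₁), X ⊆ S → Y ⊆ S → #X < κ → #Y < κ →
      (∀ x ∈ X, ∀ y ∈ Y, x < y) →
      ∃ c ∈ S, (∀ x ∈ X, x < c) ∧ (∀ y ∈ Y, c < y) := by
    intro X Y hXS hYS hX hY hXY
    obtain ⟨c, hc₁, hc₂⟩ := hsat (Subtype.val ⁻¹' X) (Subtype.val ⁻¹' Y)
      ((Cardinal.mk_preimage_of_injective _ _ Subtype.val_injective).trans_lt hX)
      ((Cardinal.mk_preimage_of_injective _ _ Subtype.val_injective).trans_lt hY)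
      (fun a ha b hb => Subtype.coe_lt_coe.mp (hXY _ ha _ hb))
    exact ⟨c.val, c.2, fun x hx => Subtype.coe_lt_coe.mpr (hc₁ ⟨x, hXS hx⟩ hx),
      fun y hy => Subtype.coe_lt_coe.mpr (hc₂ ⟨y, hYS hy⟩ hy)⟩
  set T : Set P₀ := {x | ∃ y, toLex (x, y) ∈ S} with hTdef
  apply h₀ T
  have hfib : ∀ x : ↥T, ∃ y, toLex (x.val, y) ∈ S := fun x => x.2
  choose w hw using hfib
  choose C hC1 hC2 hC3 using fun x : ↥T => top_block hκ h₁ between x.val (w x) (hw x)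
  choose D hD1 hD2 hD3 using fun x : ↥T => bot_block hκ h₁ between x.val (w x) (hw x)
  constructor
  · obtain ⟨s⟩ := hne
    exact ⟨⟨(ofLex s.val).1, (ofLex s.val).2, s.2⟩⟩
  · intro A B hA hB hAB
    obtain ⟨c, hcS, hc₁, hc₂⟩ := between
      (⋃ a : ↥A, (fun y => toLex ((a.val.val : P₀), y)) '' C a.val)
      (⋃ b : ↥B, (fun y => toLex ((b.val.val : P₀), y)) '' D b.val)
      (by
        rintro p hp
        rw [Set.mem_iUnion] at hp
        obtain ⟨a, y, hy, rfl⟩ := hp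
        exact hC1 a.val y hy)
      (by
        rintro p hp
        rw [Set.mem_iUnion] at hp
        obtain ⟨b, y, hy, rfl⟩ := hp
        exact hD1 b.val y hy)
      ((Cardinal.mk_iUnion_le _).trans_lt (Cardinal.mul_lt_of_lt hκ hA
        (Cardinal.iSup_lt_of_isRegular hreg hA
          (fun a => (Cardinal.mk_image_le).trans_lt (hC2 a.val)))))
      ((Cardinal.mk_iUnion_le _).trans_lt (Cardinal.mul_lt_of_lt hκ hB
        (Cardinal.iSup_lt_of_isRegular hreg hB
          (fun b => (Cardinal.mk_image_le).trans_lt (hD2 b.val)))))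
      (by
        intro p hp q hq
        rw [Set.mem_iUnion] at hp hq
        obtain ⟨a, y, hy, rfl⟩ := hp
        obtain ⟨b, z, hz, rfl⟩ := hq
        exact (lex_lt_iff' _ _).mpr
          (Or.inl (Subtype.coe_lt_coe.mpr (hAB a.val a.2 b.val b.2))))
    have hxT : (ofLex c).1 ∈ T := ⟨(ofLex c).2, hcS⟩
    refine ⟨⟨(ofLex c).1, hxT⟩, fun a ha => ?_, fun b hb => ?_⟩
    · -- a < ofLex c .1
      by_contra hcon
      have key : ∀ y ∈ C a, a.val = (ofLex c).1 ∧ y < (ofLex c).2 := by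
        intro y hy
        have hlt := hc₁ (toLex (a.val, y))
          (Set.mem_iUnion.mpr ⟨⟨a, ha⟩, y, hy, rfl⟩)
        rcases (lex_lt_iff' _ _).mp hlt with h | ⟨h, h'⟩
        · exact absurd (Subtype.coe_lt_coe.mp h : a < ⟨(ofLex c).1, hxT⟩) hcon
        · exact ⟨h, h'⟩
      obtain ⟨y₁, hy₁⟩ := (hC3 a (w a) (hw a)).imp (fun y hy => hy.1)
      have heq : a.val = (ofLex c).1 := (key y₁ hy₁).1
      have hmem : toLex (a.val, (ofLex c).2) ∈ S := by rw [heq]; exact hcS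
      obtain ⟨y, hyC, hle⟩ := hC3 a (ofLex c).2 hmem
      exact absurd (key y hyC).2 (not_lt.mpr hle)
    · by_contra hcon
      have key : ∀ y ∈ D b, b.val = (ofLex c).1 ∧ (ofLex c).2 < y := by
        intro y hy
        have hlt := hc₂ (toLex (b.val, y))
          (Set.mem_iUnion.mpr ⟨⟨b, hb⟩, y, hy, rfl⟩)
        rcases (lex_lt_iff' _ _).mp hlt with h | ⟨h, h'⟩
        · exact absurd (Subtype.coe_lt_coe.mp h : (⟨(ofLex c).1, hxT⟩ : ↥T) < b) hcon
        · exact ⟨h.symm, h'⟩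
      obtain ⟨y₁, hy₁⟩ := (hD3 b (w b) (hw b)).imp (fun y hy => hy.1)
      have heq : b.val = (ofLex c).1 := (key y₁ hy₁).1
      have hmem : toLex (b.val, (ofLex c).2) ∈ S := by rw [heq]; exact hcS
      obtain ⟨y, hyD, hle⟩ := hD3 b (ofLex c).2 hmem
      exact absurd (key y hyD).2 (not_lt.mpr hle)
end

section
/- Suppose κ is an infinite cardinal with κ^{<κ} = κ, β < κ is an ordinal, and for each α < β, P_α is a weakly κ-scattered linear order. Then the lexicographic product ∏_{α<β} P_α is weakly κ-scattered. -/
open Cardinal Ordinal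

universe u

section Stmt11Aux

variable {ι : Type u} [LinearOrder ι] [WellFoundedLT ι] {B : ι → Type u} [∀ i, LinearOrder (B i)]

theorem stmt11_lex_lt_iff {x y : Lex (∀ i, B i)} :
    x < y ↔ ∃ i, (∀ j, j < i → ofLex x j = ofLex y j) ∧ ofLex x i < ofLex y i := Iff.rfl

theorem stmt11_le_at {x y : Lex (∀ i, B i)} (δ : ι) (h : x < y)
    (hag : ∀ γ, γ < δ → ofLex x γ = ofLex y γ) : ofLex x δ ≤ ofLex y δ := by
  obtain ⟨i, hi, hlt⟩ := stmt11_lex_lt_iff.mp h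
  rcases lt_trichotomy i δ with h' | rfl | h'
  · exact absurd hlt (by rw [hag i h']; exact lt_irrefl _)
  · exact hlt.le
  · exact (hi δ h').le

/-- The invariant for the recursive construction: `p` is a pair of elements of `S`
sandwiched strictly between all previous pairs, with `p.1 < p.2` and `p.1, p.2` agreeing
at coordinate `α`. -/
def stmt11Good (S : Set (Lex (∀ i, B i))) (w : ι → ↑S × ↑S) (α : ι) (p : ↑S × ↑S) : Prop :=
  (∀ γ, γ < α → (((w γ).1 < p.1 ∧ p.1 < (w γ).2) ∧ ((w γ).1 < p.2 ∧ p.2 < (w γ).2)))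
  ∧ p.1 < p.2 ∧ ofLex (p.1 : Lex (∀ i, B i)) α = ofLex (p.2 : Lex (∀ i, B i)) α

theorem stmt11Good_congr {S : Set (Lex (∀ i, B i))} {w w' : ι → ↑S × ↑S} {α : ι}
    {p : ↑S × ↑S} (h : ∀ γ, γ < α → w γ = w' γ) :
    stmt11Good S w α p ↔ stmt11Good S w' α p := by
  unfold stmt11Good
  constructor
  · intro hg
    exact ⟨fun γ hγ => by rw [← h γ hγ]; exact hg.1 γ hγ, hg.2⟩
  · intro hg
    exact ⟨fun γ hγ => by rw [h γ hγ]; exact hg.1 γ hγ, hg.2⟩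

open Classical in
/-- The recursively constructed sequence of pairs. -/
noncomputable def stmt11uv (S : Set (Lex (∀ i, B i))) (d : ↑S) : ι → ↑S × ↑S :=
  WellFounded.fix wellFounded_lt
    (fun α ih =>
      if h : ∃ p, stmt11Good S (fun γ => if hγ : γ < α then ih γ hγ else (d, d)) α p
      then h.choose else (d, d))

open Classical in
theorem stmt11uv_eq (S : Set (Lex (∀ i, B i))) (d : ↑S) (α : ι) :
    stmt11uv S d α =
      if h : ∃ p, stmt11Good S (fun γ => if hγ : γ < α then stmt11uv S d γ else (d, d)) α p
      then h.choose else (d, d) := by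
  unfold stmt11uv
  rw [WellFounded.fix_eq]

theorem stmt11uv_spec (S : Set (Lex (∀ i, B i))) (d : ↑S) (α : ι)
    (h : ∃ p, stmt11Good S (stmt11uv S d) α p) :
    stmt11Good S (stmt11uv S d) α (stmt11uv S d α) := by
  have hiff : ∀ p, stmt11Good S (fun γ => if hγ : γ < α then stmt11uv S d γ else (d, d)) α p
      ↔ stmt11Good S (stmt11uv S d) α p :=
    fun p => stmt11Good_congr (fun γ hγ => by simp [hγ])
  have h' : ∃ p, stmt11Good S (fun γ => if hγ : γ < α then stmt11uv S d γ else (d, d)) α p :=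
    h.imp (fun p hp => (hiff p).mpr hp)
  rw [stmt11uv_eq S d α, dif_pos h']
  exact (hiff _).mp h'.choose_spec

end Stmt11Aux

/-- Suppose `κ` is an infinite cardinal with `κ^{<κ} = κ`, `β < κ` is an
ordinal, and for each `α < β`, `P_α` is a weakly `κ`-scattered linear order.  Then the
lexicographic product `∏_{α<β} P_α` (functions compared at the least coordinate of
difference) is weakly `κ`-scattered. -/
theorem stmt11 (κ : Cardinal.{u}) (hκ : ℵ₀ ≤ κ) (hpow : κ ^< κ = κ)
    (β : Ordinal.{u}) (hβ : β < κ.ord)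
    (P : β.ToType → Type u) [∀ α, LinearOrder (P α)]
    (hP : ∀ α, WeaklyKScattered κ (P α)) :
    WeaklyKScattered κ (Lex (∀ α, P α)) := by
  intro S hsat
  obtain ⟨⟨s₀⟩, hdense⟩ := hsat
  have hβκ : #β.ToType < κ := by rw [Cardinal.mk_toType]; exact Cardinal.lt_ord.mp hβ
  have hzero : (0 : Cardinal) < κ := lt_of_lt_of_le aleph0_pos hκ
  have hone : (1 : Cardinal) < κ := lt_of_lt_of_le one_lt_aleph0 hκ
  set uv := stmt11uv S s₀ with huvdef
  -- the sandwiched sets are κ-saturated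
  have Tsat : ∀ G : Set β.ToType, (∀ γ ∈ G, stmt11Good S uv γ (uv γ)) →
      ∀ A C : Set ↑S, (∀ a ∈ A, ∀ γ ∈ G, (uv γ).1 < a ∧ a < (uv γ).2) →
      (∀ b ∈ C, ∀ γ ∈ G, (uv γ).1 < b ∧ b < (uv γ).2) → #A < κ → #C < κ →
      (∀ a ∈ A, ∀ b ∈ C, a < b) →
      ∃ c : ↑S, (∀ γ ∈ G, (uv γ).1 < c ∧ c < (uv γ).2) ∧
        (∀ a ∈ A, a < c) ∧ (∀ b ∈ C, c < b) := by
    intro G hG A C hAT hCT hA hC hAC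
    have hU : #((fun γ => (uv γ).1) '' G) < κ :=
      (Cardinal.mk_image_le.trans (Cardinal.mk_set_le G)).trans_lt hβκ
    have hV : #((fun γ => (uv γ).2) '' G) < κ :=
      (Cardinal.mk_image_le.trans (Cardinal.mk_set_le G)).trans_lt hβκ
    have hcup1 : #(A ∪ (fun γ => (uv γ).1) '' G : Set ↑S) < κ :=
      (Cardinal.mk_union_le _ _).trans_lt (Cardinal.add_lt_of_lt hκ hA hU)
    have hcup2 : #(C ∪ (fun γ => (uv γ).2) '' G : Set ↑S) < κ :=
      (Cardinal.mk_union_le _ _).trans_lt (Cardinal.add_lt_of_lt hκ hC hV)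
    obtain ⟨c, hc1, hc2⟩ := hdense _ _ hcup1 hcup2 (by
      rintro a (ha | ⟨γ, hγ, rfl⟩) b (hb | ⟨δ, hδ, rfl⟩)
      · exact hAC a ha b hb
      · exact (hAT a ha δ hδ).2
      · exact (hCT b hb γ hγ).1
      · rcases lt_trichotomy γ δ with h | rfl | h
        · exact ((hG δ hδ).1 γ h).2.1
        · exact (hG γ hγ).2.1
        · exact ((hG γ hγ).1 δ h).1.2)
    exact ⟨c, fun γ hγ => ⟨hc1 _ (Or.inr ⟨γ, hγ, rfl⟩), hc2 _ (Or.inr ⟨γ, hγ, rfl⟩)⟩,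
      fun a ha => hc1 a (Or.inl ha), fun b hb => hc2 b (Or.inl hb)⟩
  -- pinching: sandwiched elements are determined at pinched coordinates
  have pinch : ∀ δ : β.ToType, (∀ γ, γ ≤ δ → stmt11Good S uv γ (uv γ)) →
      ∀ c : ↑S, (∀ γ, γ ≤ δ → (uv γ).1 < c ∧ c < (uv γ).2) →
      ofLex (c : Lex (∀ α, P α)) δ = ofLex (((uv δ).1 : ↑S) : Lex (∀ α, P α)) δ := by
    intro δ
    induction δ using WellFoundedLT.induction with
    | ind δ IH =>
    intro hG c hc
    have hag : ∀ δ', δ' < δ → ∀ x : ↑S, (∀ γ, γ ≤ δ' → (uv γ).1 < x ∧ x < (uv γ).2) →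
        ofLex (x : Lex (∀ α, P α)) δ' = ofLex (((uv δ').1 : ↑S) : Lex (∀ α, P α)) δ' :=
      fun δ' hδ' x hx => IH δ' hδ' (fun γ hγ => hG γ (hγ.trans hδ'.le)) x hx
    have hGδ := hG δ le_rfl
    have hcag : ∀ δ', δ' < δ →
        ofLex (c : Lex (∀ α, P α)) δ' = ofLex (((uv δ').1 : ↑S) : Lex (∀ α, P α)) δ' :=
      fun δ' hδ' => hag δ' hδ' c (fun γ hγ => hc γ (hγ.trans hδ'.le))
    have huag : ∀ δ', δ' < δ →
        ofLex (((uv δ).1 : ↑S) : Lex (∀ α, P α)) δ'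
          = ofLex (((uv δ').1 : ↑S) : Lex (∀ α, P α)) δ' :=
      fun δ' hδ' => hag δ' hδ' (uv δ).1 (fun γ hγ => (hGδ.1 γ (lt_of_le_of_lt hγ hδ')).1)
    have hvag : ∀ δ', δ' < δ →
        ofLex (((uv δ).2 : ↑S) : Lex (∀ α, P α)) δ'
          = ofLex (((uv δ').1 : ↑S) : Lex (∀ α, P α)) δ' :=
      fun δ' hδ' => hag δ' hδ' (uv δ).2 (fun γ hγ => (hGδ.1 γ (lt_of_le_of_lt hγ hδ')).2)
    have h1 : ofLex (((uv δ).1 : ↑S) : Lex (∀ α, P α)) δ ≤ ofLex (c : Lex (∀ α, P α)) δ :=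
      stmt11_le_at δ (Subtype.coe_lt_coe.mpr (hc δ le_rfl).1)
        (fun γ hγ => (huag γ hγ).trans (hcag γ hγ).symm)
    have h2 : ofLex (c : Lex (∀ α, P α)) δ ≤ ofLex (((uv δ).2 : ↑S) : Lex (∀ α, P α)) δ :=
      stmt11_le_at δ (Subtype.coe_lt_coe.mpr (hc δ le_rfl).2)
        (fun γ hγ => (hcag γ hγ).trans (hvag γ hγ).symm)
    exact le_antisymm (h2.trans_eq hGδ.2.2.symm) h1
  -- the construction succeeds at every stage
  have main : ∀ α, stmt11Good S uv α (uv α) := by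
    intro α
    induction α using WellFoundedLT.induction with
    | ind α IH =>
    rw [huvdef]
    apply stmt11uv_spec
    rw [← huvdef]
    by_contra hno
    have hGio : ∀ γ ∈ Set.Iio α, stmt11Good S uv γ (uv γ) := fun γ hγ => IH γ hγ
    -- strict monotonicity of the projection to coordinate α on sandwiched elements
    have key : ∀ c₁ c₂ : ↑S, (∀ γ, γ < α → (uv γ).1 < c₁ ∧ c₁ < (uv γ).2) →
        (∀ γ, γ < α → (uv γ).1 < c₂ ∧ c₂ < (uv γ).2) → c₁ < c₂ →
        ofLex (c₁ : Lex (∀ α, P α)) α < ofLex (c₂ : Lex (∀ α, P α)) α := by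
      intro c₁ c₂ h1 h2 hlt
      have hag : ∀ δ, δ < α →
          ofLex (c₁ : Lex (∀ α, P α)) δ = ofLex (c₂ : Lex (∀ α, P α)) δ := by
        intro δ hδ
        have hGle : ∀ γ, γ ≤ δ → stmt11Good S uv γ (uv γ) :=
          fun γ hγ => IH γ (lt_of_le_of_lt hγ hδ)
        rw [pinch δ hGle c₁ (fun γ hγ => h1 γ (lt_of_le_of_lt hγ hδ)),
          pinch δ hGle c₂ (fun γ hγ => h2 γ (lt_of_le_of_lt hγ hδ))]
      have hne2 : ofLex (c₁ : Lex (∀ α, P α)) α ≠ ofLex (c₂ : Lex (∀ α, P α)) α :=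
        fun heq => hno ⟨(c₁, c₂), fun γ hγ => ⟨h1 γ hγ, h2 γ hγ⟩, hlt, heq⟩
      exact lt_of_le_of_ne (stmt11_le_at α (Subtype.coe_lt_coe.mpr hlt) hag) hne2
    set Q : Set (P α) := {x | ∃ c : ↑S,
      (∀ γ, γ < α → (uv γ).1 < c ∧ c < (uv γ).2) ∧ ofLex (c : Lex (∀ α, P α)) α = x}
      with hQdef
    refine hP α Q ⟨?_, ?_⟩
    · obtain ⟨c, hcT, -, -⟩ := Tsat (Set.Iio α) hGio ∅ ∅ (by simp) (by simp)
        (by simpa using hzero) (by simpa using hzero) (by simp)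
      exact ⟨⟨ofLex (c : Lex (∀ α, P α)) α, c, fun γ hγ => hcT γ hγ, rfl⟩⟩
    · intro A C hA hC hAC
      have hq : ∀ q : ↑Q, ∃ c : ↑S,
          (∀ γ, γ < α → (uv γ).1 < c ∧ c < (uv γ).2) ∧
            ofLex (c : Lex (∀ α, P α)) α = (q : P α) := fun q => q.2
      choose f hfT hfv using hq
      obtain ⟨c, hcT, hca, hcb⟩ := Tsat (Set.Iio α) hGio (f '' A) (f '' C)
        (by rintro a ⟨qa, hqa, rfl⟩ γ hγ; exact hfT qa γ hγ)
        (by rintro b ⟨qb, hqb, rfl⟩ γ hγ; exact hfT qb γ hγ)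
        (Cardinal.mk_image_le.trans_lt hA) (Cardinal.mk_image_le.trans_lt hC)
        (by
          rintro a ⟨qa, hqa, rfl⟩ b ⟨qb, hqb, rfl⟩
          have hval : ofLex ((f qa : ↑S) : Lex (∀ α, P α)) α
              < ofLex ((f qb : ↑S) : Lex (∀ α, P α)) α := by
            rw [hfv qa, hfv qb]
            exact Subtype.coe_lt_coe.mpr (hAC qa hqa qb hqb)
          have hag : ∀ γ, γ < α → ofLex ((f qa : ↑S) : Lex (∀ α, P α)) γ
              = ofLex ((f qb : ↑S) : Lex (∀ α, P α)) γ := by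
            intro δ hδ
            have hGle : ∀ γ, γ ≤ δ → stmt11Good S uv γ (uv γ) :=
              fun γ hγ => IH γ (lt_of_le_of_lt hγ hδ)
            rw [pinch δ hGle (f qa) (fun γ hγ => hfT qa γ (lt_of_le_of_lt hγ hδ)),
              pinch δ hGle (f qb) (fun γ hγ => hfT qb γ (lt_of_le_of_lt hγ hδ))]
          exact Subtype.coe_lt_coe.mp ⟨α, hag, hval⟩)
      refine ⟨⟨ofLex (c : Lex (∀ α, P α)) α, c, fun γ hγ => hcT γ hγ, rfl⟩, ?_, ?_⟩
      · intro qa hqa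
        have hlt := key (f qa) c (hfT qa) (fun γ hγ => hcT γ hγ) (hca _ ⟨qa, hqa, rfl⟩)
        rw [← Subtype.coe_lt_coe]
        show (qa : P α) < ofLex (c : Lex (∀ α, P α)) α
        rw [← hfv qa]
        exact hlt
      · intro qb hqb
        have hlt := key c (f qb) (fun γ hγ => hcT γ hγ) (hfT qb) (hcb _ ⟨qb, hqb, rfl⟩)
        rw [← Subtype.coe_lt_coe]
        show ofLex (c : Lex (∀ α, P α)) α < (qb : P α)
        rw [← hfv qb]
        exact hlt
  -- final contradiction
  have hGuniv : ∀ γ ∈ (Set.univ : Set β.ToType), stmt11Good S uv γ (uv γ) := fun γ _ => main γ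
  obtain ⟨c, hcT, -, -⟩ := Tsat Set.univ hGuniv ∅ ∅ (by simp) (by simp)
    (by simpa using hzero) (by simpa using hzero) (by simp)
  obtain ⟨c', hcT', hca', -⟩ := Tsat Set.univ hGuniv {c} ∅
    (by rintro a rfl γ _; exact hcT γ (Set.mem_univ _)) (by simp)
    (by simpa using hone) (by simpa using hzero) (by simp)
  have hlt : c < c' := hca' c rfl
  have hofeq : ofLex (c : Lex (∀ α, P α)) = ofLex ((c' : ↑S) : Lex (∀ α, P α)) := by
    funext γ
    rw [pinch γ (fun γ' _ => main γ') c (fun γ' _ => hcT γ' (Set.mem_univ _)),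
      pinch γ (fun γ' _ => main γ') c' (fun γ' _ => hcT' γ' (Set.mem_univ _))]
  have hcc : c = c' := Subtype.ext (ofLex.injective hofeq)
  rw [hcc] at hlt
  exact lt_irrefl _ hlt
end
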